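/- Let Y be a real-valued random variable and n ∈ ℕ with E[Y^{2n}] < ∞. Then the Hankel moment matrix M_{Y,n} = (E[Y^{i+j}])_{0≤i,j≤n} is invertible if and only if |supp(Y)| > n. -/

import Mathlib

open MeasureTheory Polynomial Matrix

/-- The Hankel moment matrix `M_{Y,n} = (E[Y^{i+j}])_{0 ≤ i,j ≤ n}`. -/
noncomputable def hankelMoment {Ω : Type*} [MeasurableSpace Ω] (P : Measure Ω)
    (Y : Ω → ℝ) (n : ℕ) : Matrix (Fin (n + 1)) (Fin (n + 1)) ℝ :=
  Matrix.of fun i j => ∫ ω, Y ω ^ ((i : ℕ) + (j : ℕ)) ∂P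

section Aux

variable {Ω : Type*} [MeasurableSpace Ω] {P : Measure Ω} [IsProbabilityMeasure P]
  {Y : Ω → ℝ} {n : ℕ}

/-- the polynomial evaluation `∑ c j * Y ω ^ j` -/
noncomputable def hankelG (Y : Ω → ℝ) (n : ℕ) (c : Fin (n + 1) → ℝ) (ω : Ω) : ℝ :=
  ∑ j : Fin (n + 1), c j * Y ω ^ (j : ℕ)

lemma hankel_int_pow (hYm : Measurable Y) (hY : Integrable (fun ω => Y ω ^ (2 * n)) P)
    {k : ℕ} (hk : k ≤ 2 * n) : Integrable (fun ω => Y ω ^ k) P := by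
  refine Integrable.mono' ((integrable_const (1 : ℝ)).add hY)
    (hYm.pow_const k).aestronglyMeasurable ?_
  filter_upwards with ω
  have h2n : (0:ℝ) ≤ Y ω ^ (2 * n) := (even_two_mul n).pow_nonneg _
  rcases le_total (|Y ω|) 1 with h | h
  · calc ‖Y ω ^ k‖ = |Y ω| ^ k := by rw [Real.norm_eq_abs, abs_pow]
      _ ≤ 1 := pow_le_one₀ (abs_nonneg _) h
      _ ≤ (fun _ => (1:ℝ)) ω + Y ω ^ (2 * n) := le_add_of_nonneg_right h2n
  · calc ‖Y ω ^ k‖ = |Y ω| ^ k := by rw [Real.norm_eq_abs, abs_pow]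
      _ ≤ |Y ω| ^ (2 * n) := pow_le_pow_right₀ h hk
      _ = Y ω ^ (2 * n) := (even_two_mul n).pow_abs _
      _ ≤ (fun _ => (1:ℝ)) ω + Y ω ^ (2 * n) := le_add_of_nonneg_left zero_le_one

lemma hankel_fin_le {i : Fin (n + 1)} : (i : ℕ) ≤ n := Nat.lt_succ_iff.mp i.isLt

lemma hankel_int_mulG (hYm : Measurable Y) (hY : Integrable (fun ω => Y ω ^ (2 * n)) P)
    (c : Fin (n + 1) → ℝ) (i : Fin (n + 1)) :
    Integrable (fun ω => Y ω ^ (i : ℕ) * hankelG Y n c ω) P := by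
  have : (fun ω => Y ω ^ (i : ℕ) * hankelG Y n c ω)
      = fun ω => ∑ j : Fin (n + 1), c j * Y ω ^ ((i : ℕ) + (j : ℕ)) := by
    funext ω
    simp only [hankelG]; rw [Finset.mul_sum]
    refine Finset.sum_congr rfl fun j _ => ?_
    rw [pow_add]; ring
  rw [this]
  exact integrable_finset_sum _ fun j _ =>
    (hankel_int_pow hYm hY (by have := hankel_fin_le (i := i); have := hankel_fin_le (i := j); omega)).const_mul _

lemma hankel_mulVec (hYm : Measurable Y) (hY : Integrable (fun ω => Y ω ^ (2 * n)) P)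
    (c : Fin (n + 1) → ℝ) (i : Fin (n + 1)) :
    (hankelMoment P Y n *ᵥ c) i = ∫ ω, Y ω ^ (i : ℕ) * hankelG Y n c ω ∂P := by
  simp only [Matrix.mulVec, dotProduct, hankelMoment, Matrix.of_apply]
  have : ∀ j : Fin (n + 1), (∫ ω, Y ω ^ ((i : ℕ) + (j : ℕ)) ∂P) * c j
      = ∫ ω, Y ω ^ ((i : ℕ) + (j : ℕ)) * c j ∂P := fun j => (integral_mul_const _ _).symm
  rw [Finset.sum_congr rfl fun j _ => this j, ← integral_finset_sum]
  · refine integral_congr_ae (Filter.Eventually.of_forall fun ω => ?_)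
    simp only [hankelG]; rw [Finset.mul_sum]
    refine Finset.sum_congr rfl fun j _ => ?_
    rw [pow_add]; ring
  · exact fun j _ =>
      (hankel_int_pow hYm hY (by have := hankel_fin_le (i := i); have := hankel_fin_le (i := j); omega)).mul_const _

lemma hankel_quadForm (hYm : Measurable Y) (hY : Integrable (fun ω => Y ω ^ (2 * n)) P)
    (c : Fin (n + 1) → ℝ) :
    c ⬝ᵥ (hankelMoment P Y n *ᵥ c) = ∫ ω, (hankelG Y n c ω) ^ 2 ∂P := by
  simp only [dotProduct]
  have h1 : ∀ i : Fin (n + 1), c i * (hankelMoment P Y n *ᵥ c) i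
      = ∫ ω, c i * (Y ω ^ (i : ℕ) * hankelG Y n c ω) ∂P := by
    intro i
    rw [hankel_mulVec hYm hY, ← integral_const_mul]
  rw [Finset.sum_congr rfl fun i _ => h1 i, ← integral_finset_sum]
  · refine integral_congr_ae (Filter.Eventually.of_forall fun ω => ?_)
    show ∑ i : Fin (n + 1), c i * (Y ω ^ (i : ℕ) * hankelG Y n c ω) = (hankelG Y n c ω) ^ 2
    rw [sq]
    calc ∑ i : Fin (n + 1), c i * (Y ω ^ (i : ℕ) * hankelG Y n c ω)
        = (∑ i : Fin (n + 1), c i * Y ω ^ (i : ℕ)) * hankelG Y n c ω := by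
          rw [Finset.sum_mul]; exact Finset.sum_congr rfl fun i _ => by ring
      _ = hankelG Y n c ω * hankelG Y n c ω := rfl
  · exact fun i _ => (hankel_int_mulG hYm hY c i).const_mul _

lemma hankel_int_sq (hYm : Measurable Y) (hY : Integrable (fun ω => Y ω ^ (2 * n)) P)
    (c : Fin (n + 1) → ℝ) : Integrable (fun ω => (hankelG Y n c ω) ^ 2) P := by
  have : (fun ω => (hankelG Y n c ω) ^ 2)
      = fun ω => ∑ i : Fin (n + 1), c i * (Y ω ^ (i : ℕ) * hankelG Y n c ω) := by
    funext ω
    rw [sq]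
    calc hankelG Y n c ω * hankelG Y n c ω
        = (∑ i : Fin (n + 1), c i * Y ω ^ (i : ℕ)) * hankelG Y n c ω := rfl
      _ = ∑ i : Fin (n + 1), c i * (Y ω ^ (i : ℕ) * hankelG Y n c ω) := by
          rw [Finset.sum_mul]; exact Finset.sum_congr rfl fun i _ => by ring
  rw [this]
  exact integrable_finset_sum _ fun i _ => (hankel_int_mulG hYm hY c i).const_mul _

end Aux

/-- For a random variable `Y` with `E[Y^{2n}] < ∞`, the Hankel moment matrix
`M_{Y,n}` is invertible iff there is no finite set `S` of cardinality at most `n`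
with `P(Y ∈ S) = 1`. -/
theorem hankelMoment_isUnit_iff
    {Ω : Type*} [MeasurableSpace Ω] (P : Measure Ω) [IsProbabilityMeasure P]
    (Y : Ω → ℝ) (hYm : Measurable Y) (n : ℕ)
    (hY : Integrable (fun ω => Y ω ^ (2 * n)) P) :
    IsUnit (hankelMoment P Y n) ↔
      ∀ S : Finset ℝ, S.card ≤ n → P (Y ⁻¹' (S : Set ℝ)) ≠ 1 := by
  constructor
  · -- invertible → support big
    intro hU S hcard hPS
    set p : Polynomial ℝ := ∏ s ∈ S, (X - C s) with hp
    have hmonic : p.Monic := monic_prod_of_monic _ _ fun s _ => monic_X_sub_C s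
    have hdeg : p.natDegree = S.card := by
      rw [hp, natDegree_prod _ _ fun s _ => X_sub_C_ne_zero s]
      simp [natDegree_X_sub_C]
    set c : Fin (n + 1) → ℝ := fun i => p.coeff (i : ℕ) with hc
    have hcne : c ≠ 0 := by
      intro h
      have : c ⟨S.card, by omega⟩ = 1 := by
        simp only [hc]
        simpa [hdeg] using hmonic.coeff_natDegree
      rw [h] at this
      simp at this
    -- a.e. Y ω ∈ S
    have hae : ∀ᵐ ω ∂P, Y ω ∈ (S : Set ℝ) := by
      have := (prob_compl_eq_zero_iff (hYm (S.measurableSet))).mpr hPS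
      rw [ae_iff]
      convert this using 2
      rfl
    -- g c = eval p (Y ω)
    have hg : ∀ ω, hankelG Y n c ω = p.eval (Y ω) := by
      intro ω
      rw [eval_eq_sum_range' (n := n + 1) (by rw [hdeg]; omega) (Y ω),
        ← Fin.sum_univ_eq_sum_range (fun k => p.coeff k * Y ω ^ k) (n + 1)]
      rfl
    have hzero : hankelMoment P Y n *ᵥ c = 0 := by
      funext i
      rw [hankel_mulVec hYm hY, Pi.zero_apply]
      refine integral_eq_zero_of_ae ?_
      filter_upwards [hae] with ω hω
      have : p.eval (Y ω) = 0 := by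
        rw [hp, eval_prod]
        exact Finset.prod_eq_zero (Finset.mem_coe.mp hω) (by simp)
      simp [hg ω, this]
    have hinj := Matrix.mulVec_injective_iff_isUnit.mpr hU
    exact hcne (hinj (by rw [hzero, Matrix.mulVec_zero]))
  · -- support big → PosDef → invertible
    intro hS
    refine Matrix.PosDef.isUnit (Matrix.posDef_iff_dotProduct_mulVec.mpr ⟨?_, ?_⟩)
    · -- Hermitian
      ext i j
      simp [hankelMoment, Matrix.conjTranspose_apply, Nat.add_comm]
    · intro c hcne
      have hstar : star c = c := by funext i; simp
      rw [hstar, hankel_quadForm hYm hY]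
      have hnonneg : 0 ≤ ∫ ω, (hankelG Y n c ω) ^ 2 ∂P :=
        integral_nonneg fun ω => sq_nonneg _
      rcases hnonneg.lt_or_eq with h | h
      · exact h
      exfalso
      -- ∫ g² = 0 → g = 0 a.e.
      have hg0 : (fun ω => (hankelG Y n c ω) ^ 2) =ᶠ[ae P] 0 :=
        (integral_eq_zero_iff_of_nonneg (fun ω => sq_nonneg _)
          (hankel_int_sq hYm hY c)).mp h.symm
      set p : Polynomial ℝ := ∑ j : Fin (n + 1), C (c j) * X ^ (j : ℕ) with hp
      have hcoeff : ∀ j : Fin (n + 1), p.coeff (j : ℕ) = c j := by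
        intro j
        rw [hp, finset_sum_coeff]
        rw [Finset.sum_eq_single j]
        · simp
        · intro b _ hbj
          rw [coeff_C_mul, coeff_X_pow, if_neg (fun hh => hbj (Fin.ext hh.symm)), mul_zero]
        · simp
      have hpne : p ≠ 0 := by
        intro h0
        apply hcne
        funext j
        rw [← hcoeff j, h0, Pi.zero_apply, coeff_zero]
      have hpdeg : p.natDegree ≤ n :=
        natDegree_sum_le_of_forall_le _ _ fun j _ =>
          le_trans (natDegree_C_mul_X_pow_le _ _) hankel_fin_le
      have hgeval : ∀ ω, hankelG Y n c ω = p.eval (Y ω) := by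
        intro ω
        rw [eval_eq_sum_range' (n := n + 1) (Nat.lt_succ_of_le hpdeg) (Y ω),
          ← Fin.sum_univ_eq_sum_range (fun k => p.coeff k * Y ω ^ k) (n + 1)]
        simp only [hankelG]
        exact Finset.sum_congr rfl fun j _ => by rw [hcoeff j]
      set S : Finset ℝ := p.roots.toFinset with hSdef
      have hScard : S.card ≤ n :=
        le_trans (Multiset.toFinset_card_le _) (le_trans (card_roots' p) hpdeg)
      refine hS S hScard ?_
      rw [← prob_compl_eq_zero_iff (hYm S.measurableSet)]
      have hmem : ∀ᵐ ω ∂P, Y ω ∈ (S : Set ℝ) := by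
        filter_upwards [hg0] with ω hω
        have hgz : hankelG Y n c ω = 0 := by
          have h2 : hankelG Y n c ω ^ 2 = 0 := hω
          exact sq_eq_zero_iff.mp h2
        rw [Finset.mem_coe, hSdef, Multiset.mem_toFinset]
        exact (mem_roots hpne).mpr (by rw [IsRoot, ← hgeval ω, hgz])
      exact ae_iff.mp hmem
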